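/- Let {z_n} be a sequence of points with |z_n| → ∞, and let n(r) denote the number of points with |z_n| ≤ r. Let φ be non-decreasing, unbounded, and differentiable with log r ≤ φ(r) ≤ r. Then for μ > 0, the sum Σ_n 1/φ(|z_n|)^μ converges if and only if the integral ∫^∞ φ'(t)·n(t)/φ(t)^{μ+1} dt converges. Consequently, the φ-order of n(r) equals the φ-exponent of convergence of {z_n}. -/

import Mathlib

open Set Filter Real MeasureTheory

/-- The counting function of the sequence `z`. -/
noncomputable def countingFun (z : ℕ → ℂ) (r : ℝ) : ℝ :=
  (Nat.card {n : ℕ | ‖z n‖ ≤ r} : ℝ)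

namespace CSIAux

variable {R₀ : ℝ} {φ : ℝ → ℝ} {z : ℕ → ℂ}

lemma csi_finite (hz : Tendsto (fun n => ‖z n‖) atTop atTop) (r : ℝ) :
    {n : ℕ | ‖z n‖ ≤ r}.Finite := by
  have h : ∀ᶠ n in cofinite, r < ‖z n‖ := by
    rw [Nat.cofinite_eq_atTop]
    exact hz.eventually (eventually_gt_atTop r)
  have := Filter.eventually_cofinite.mp h
  refine this.subset fun n hn => ?_
  simpa [not_lt] using hn

lemma csi_card (z : ℕ → ℂ) (r : ℝ) :
    countingFun z r = (({n : ℕ | ‖z n‖ ≤ r}).ncard : ℝ) := by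
  rw [countingFun, Nat.card_coe_set_eq]

lemma csi_nonneg (z : ℕ → ℂ) (r : ℝ) : 0 ≤ countingFun z r := Nat.cast_nonneg _

lemma csi_mono (hz : Tendsto (fun n => ‖z n‖) atTop atTop) :
    Monotone (countingFun z) := by
  intro r s hrs
  rw [csi_card, csi_card]
  exact_mod_cast Set.ncard_le_ncard (fun n hn => le_trans hn hrs) (csi_finite hz s)

lemma csi_meas (hz : Tendsto (fun n => ‖z n‖) atTop atTop) :
    Measurable (countingFun z) := (csi_mono hz).measurable

lemma ev_one (hz : Tendsto (fun n => ‖z n‖) atTop atTop) :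
    ∀ᶠ r in atTop, 1 ≤ countingFun z r := by
  filter_upwards [eventually_ge_atTop (‖z 0‖)] with r hr
  rw [csi_card]
  have h1 : 0 < ({n : ℕ | ‖z n‖ ≤ r}).ncard :=
    (Set.ncard_pos (csi_finite hz r)).2 ⟨0, hr⟩
  exact_mod_cast h1

lemma countingFun_tsum (hz : Tendsto (fun n => ‖z n‖) atTop atTop) (t : ℝ) :
    ENNReal.ofReal (countingFun z t)
      = ∑' n, Set.indicator (Ici (‖z n‖)) (fun _ => (1 : ENNReal)) t := by
  classical
  have hf := csi_finite hz t
  have h1 : ∀ n, Set.indicator (Ici (‖z n‖)) (fun _ => (1 : ENNReal)) t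
      = if n ∈ hf.toFinset then (1 : ENNReal) else 0 := by
    intro n
    simp [Set.indicator_apply, mem_Ici, Set.Finite.mem_toFinset]
  rw [tsum_congr h1, tsum_eq_sum (s := hf.toFinset) (fun n hn => if_neg hn)]
  have h2 : (∑ n ∈ hf.toFinset, if n ∈ hf.toFinset then (1 : ENNReal) else 0)
      = (hf.toFinset.card : ENNReal) := by
    rw [Finset.sum_congr rfl (fun n hn => if_pos hn)]
    simp
  rw [h2, csi_card, Set.ncard_eq_toFinset_card _ hf]
  simp [ENNReal.ofReal_natCast]

lemma deriv_nonneg (hφmono : MonotoneOn φ (Ioi R₀)) (hφdiff : Differentiable ℝ φ)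
    {x : ℝ} (hx : R₀ < x) : 0 ≤ deriv φ x := by
  have hd : HasDerivAt φ (deriv φ x) x := (hφdiff x).hasDerivAt
  have hs : Tendsto (slope φ x) (nhdsWithin x (Ioi x)) (nhds (deriv φ x)) :=
    (hasDerivAt_iff_tendsto_slope.mp hd).mono_left
      (nhdsWithin_mono x (fun y hy => by simpa using hy.ne'))
  refine ge_of_tendsto hs ?_
  filter_upwards [self_mem_nhdsWithin] with y hy
  rw [slope_def_field]
  have h1 : φ x ≤ φ y := hφmono hx (hx.trans hy) (le_of_lt hy)
  have h2 : (0:ℝ) < y - x := sub_pos.2 hy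
  exact div_nonneg (sub_nonneg.2 h1) h2.le

lemma ftc_rpow (hφbound : ∀ r ≥ R₀, 0 < φ r ∧ log r ≤ φ r ∧ φ r ≤ r)
    (hφmono : MonotoneOn φ (Ioi R₀)) (hφunb : Tendsto φ atTop atTop)
    (hφdiff : Differentiable ℝ φ) {ν b : ℝ} (hν : 0 < ν) (hb : R₀ < b) :
    IntegrableOn (fun t => deriv φ t * φ t ^ (-ν - 1)) (Ioi b) ∧
      ∫⁻ t in Ioi b, ENNReal.ofReal (deriv φ t * φ t ^ (-ν - 1))
        = ENNReal.ofReal (φ b ^ (-ν) / ν) := by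
  have hφpos : ∀ x ∈ Ici b, 0 < φ x := fun x hx => (hφbound x (hb.le.trans hx)).1
  set g : ℝ → ℝ := fun t => -(φ t ^ (-ν)) / ν with hg
  have hderiv : ∀ x ∈ Ici b, HasDerivAt g (deriv φ x * φ x ^ (-ν - 1)) x := by
    intro x hx
    have h1 : HasDerivAt (fun t => φ t ^ (-ν)) (deriv φ x * (-ν) * φ x ^ (-ν - 1)) x :=
      (hφdiff x).hasDerivAt.rpow_const (Or.inl (hφpos x hx).ne')
    have h2 := (h1.neg).div_const ν
    rw [show deriv φ x * φ x ^ (-ν - 1) = -(deriv φ x * -ν * φ x ^ (-ν - 1)) / ν by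
      rw [eq_div_iff hν.ne']; ring]
    exact h2
  have g'nonneg : ∀ x ∈ Ioi b, 0 ≤ deriv φ x * φ x ^ (-ν - 1) := fun x hx =>
    mul_nonneg (deriv_nonneg hφmono hφdiff (hb.trans hx))
      (Real.rpow_nonneg (hφpos x (mem_Ici.2 (le_of_lt hx))).le _)
  have gtend : Tendsto g atTop (nhds 0) := by
    have h3 := ((tendsto_rpow_neg_atTop hν).comp hφunb).neg.div_const ν
    simpa using h3
  have hint : IntegrableOn (fun t => deriv φ t * φ t ^ (-ν - 1)) (Ioi b) :=
    integrableOn_Ioi_deriv_of_nonneg' hderiv g'nonneg gtend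
  refine ⟨hint, ?_⟩
  rw [← ofReal_integral_eq_lintegral_ofReal hint
    ((ae_restrict_iff' measurableSet_Ioi).2 (Filter.Eventually.of_forall g'nonneg))]
  rw [integral_Ioi_of_hasDerivAt_of_nonneg' hderiv g'nonneg gtend]
  congr 1
  rw [hg]
  ring

lemma w_meas (hφdiff : Differentiable ℝ φ) (c : ℝ) :
    Measurable (fun t => ENNReal.ofReal (deriv φ t * φ t ^ c)) :=
  ((measurable_deriv φ).mul
    ((hφdiff.continuous.measurable).pow_const c)).ennreal_ofReal

lemma f_meas (hz : Tendsto (fun n => ‖z n‖) atTop atTop)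
    (hφdiff : Differentiable ℝ φ) (μ : ℝ) :
    Measurable (fun t => deriv φ t * countingFun z t / φ t ^ (μ + 1)) :=
  ((measurable_deriv φ).mul (csi_meas hz)).div
    ((hφdiff.continuous.measurable).pow_const (μ + 1))

lemma restrict_inter_eq (a c : ℝ) :
    (volume : Measure ℝ).restrict (Ici c ∩ Ioi a)
      = (volume : Measure ℝ).restrict (Ioi (max a c)) := by
  apply Measure.restrict_congr_set
  rw [Filter.eventuallyEq_set]
  have h1 : {x : ℝ | x ≠ c} ∈ ae (volume : Measure ℝ) := by
    rw [mem_ae_iff]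
    simpa using volume_singleton (a := c)
  filter_upwards [h1] with x hx
  simp only [mem_inter_iff, mem_Ici, mem_Ioi, lt_max_iff, max_lt_iff]
  constructor
  · rintro ⟨h2, h3⟩
    constructor <;> [exact h3; exact lt_of_le_of_ne h2 (Ne.symm hx)]
  · rintro ⟨h2, h3⟩
    exact ⟨h3.le, h2⟩

lemma main_id (hz : Tendsto (fun n => ‖z n‖) atTop atTop)
    (hφbound : ∀ r ≥ R₀, 0 < φ r ∧ log r ≤ φ r ∧ φ r ≤ r)
    (hφmono : MonotoneOn φ (Ioi R₀)) (hφunb : Tendsto φ atTop atTop)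
    (hφdiff : Differentiable ℝ φ) {μ a : ℝ} (hμ : 0 < μ) (ha : R₀ < a) :
    ∫⁻ t in Ioi a, ENNReal.ofReal (deriv φ t * countingFun z t / φ t ^ (μ + 1))
      = ∑' n, ENNReal.ofReal (φ (max a (‖z n‖)) ^ (-μ) / μ) := by
  have step1 : ∫⁻ t in Ioi a, ENNReal.ofReal (deriv φ t * countingFun z t / φ t ^ (μ + 1))
      = ∫⁻ t in Ioi a, ∑' n, Set.indicator (Ici (‖z n‖))
          (fun s => ENNReal.ofReal (deriv φ s * φ s ^ (-μ - 1))) t := by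
    refine lintegral_congr_ae ((ae_restrict_iff' measurableSet_Ioi).2
      (Filter.Eventually.of_forall fun t ht => ?_))
    dsimp only
    have htR : R₀ < t := ha.trans ht
    have hφt : 0 < φ t := (hφbound t htR.le).1
    have e1 : deriv φ t * countingFun z t / φ t ^ (μ + 1)
        = (deriv φ t * φ t ^ (-μ - 1)) * countingFun z t := by
      have e2 : (-μ - 1 : ℝ) = -(μ + 1) := by ring
      rw [e2, Real.rpow_neg hφt.le]
      ring
    have hw : 0 ≤ deriv φ t * φ t ^ (-μ - 1) :=
      mul_nonneg (deriv_nonneg hφmono hφdiff htR) (Real.rpow_nonneg hφt.le _)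
    rw [e1, ENNReal.ofReal_mul hw, countingFun_tsum hz t, ← ENNReal.tsum_mul_left]
    refine tsum_congr fun n => ?_
    by_cases h : ‖z n‖ ≤ t <;>
      simp [Set.indicator_apply, mem_Ici, h]
  rw [step1, lintegral_tsum
    (fun n => ((w_meas hφdiff (-μ - 1)).indicator measurableSet_Ici).aemeasurable)]
  refine tsum_congr fun n => ?_
  rw [lintegral_indicator measurableSet_Ici, Measure.restrict_restrict measurableSet_Ici,
    restrict_inter_eq]
  exact (ftc_rpow hφbound hφmono hφunb hφdiff hμ
    (lt_of_lt_of_le ha (le_max_left _ _))).2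

lemma summable_ofReal_iff {f : ℕ → ℝ} (hf : ∀ n, 0 ≤ f n) :
    Summable f ↔ ∑' n, ENNReal.ofReal (f n) ≠ ⊤ := by
  constructor
  · intro h
    rw [← ENNReal.ofReal_tsum_of_nonneg hf h]
    exact ENNReal.ofReal_ne_top
  · intro h
    exact (ENNReal.summable_toReal h).congr fun n => ENNReal.toReal_ofReal (hf n)

lemma summable_shift (hz : Tendsto (fun n => ‖z n‖) atTop atTop)
    (hφbound : ∀ r ≥ R₀, 0 < φ r ∧ log r ≤ φ r ∧ φ r ≤ r)
    {μ a : ℝ} (hμ : 0 < μ) (ha : R₀ < a) :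
    Summable (fun n => 1 / φ (‖z n‖) ^ μ) ↔
      Summable (fun n => φ (max a (‖z n‖)) ^ (-μ) / μ) := by
  obtain ⟨N, hN⟩ := Filter.eventually_atTop.mp (hz.eventually (eventually_gt_atTop a))
  have key : ∀ n ≥ N, φ (max a (‖z n‖)) ^ (-μ) / μ
      = μ⁻¹ * (1 / φ (‖z n‖) ^ μ) := by
    intro n hn
    have h1 : a < ‖z n‖ := hN n hn
    have h2 : 0 < φ (‖z n‖) := (hφbound _ (ha.le.trans h1.le)).1
    rw [max_eq_right h1.le, Real.rpow_neg h2.le, one_div, div_eq_mul_inv, mul_comm]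
  rw [← summable_nat_add_iff N, ← summable_nat_add_iff (f := fun n =>
    φ (max a (‖z n‖)) ^ (-μ) / μ) N]
  have e : (fun n : ℕ => φ (max a (‖z (n + N)‖)) ^ (-μ) / μ)
      = fun n : ℕ => μ⁻¹ * (1 / φ (‖z (n + N)‖) ^ μ) :=
    funext fun n => key _ (Nat.le_add_left N n)
  rw [e, summable_mul_left_iff (inv_ne_zero hμ.ne')]

lemma tail_nonneg (hφbound : ∀ r ≥ R₀, 0 < φ r ∧ log r ≤ φ r ∧ φ r ≤ r)
    {μ a : ℝ} (hμ : 0 < μ) (ha : R₀ < a) (n : ℕ) :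
    0 ≤ φ (max a (‖z n‖)) ^ (-μ) / μ :=
  div_nonneg (Real.rpow_nonneg
    (hφbound _ (le_trans ha.le (le_max_left _ _))).1.le _) hμ.le

lemma f_nonneg_on (hz : Tendsto (fun n => ‖z n‖) atTop atTop)
    (hφbound : ∀ r ≥ R₀, 0 < φ r ∧ log r ≤ φ r ∧ φ r ≤ r)
    (hφmono : MonotoneOn φ (Ioi R₀)) (hφdiff : Differentiable ℝ φ)
    {μ a : ℝ} (ha : R₀ < a) :
    ∀ t ∈ Ioi a, 0 ≤ deriv φ t * countingFun z t / φ t ^ (μ + 1) := by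
  intro t ht
  have htR : R₀ < t := ha.trans ht
  exact div_nonneg (mul_nonneg (deriv_nonneg hφmono hφdiff htR) (csi_nonneg z t))
    (Real.rpow_nonneg (hφbound t htR.le).1.le _)

lemma part1_forward (hz : Tendsto (fun n => ‖z n‖) atTop atTop)
    (hφbound : ∀ r ≥ R₀, 0 < φ r ∧ log r ≤ φ r ∧ φ r ≤ r)
    (hφmono : MonotoneOn φ (Ioi R₀)) (hφunb : Tendsto φ atTop atTop)
    (hφdiff : Differentiable ℝ φ) {μ a : ℝ} (hμ : 0 < μ) (ha : R₀ < a)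
    (hs : Summable (fun n => 1 / φ (‖z n‖) ^ μ)) :
    IntegrableOn (fun t => deriv φ t * countingFun z t / φ t ^ (μ + 1)) (Ioi a) := by
  have hsum : ∑' n, ENNReal.ofReal (φ (max a (‖z n‖)) ^ (-μ) / μ) ≠ ⊤ :=
    (summable_ofReal_iff (tail_nonneg hφbound hμ ha)).1
      ((summable_shift hz hφbound hμ ha).1 hs)
  refine ⟨((f_meas hz hφdiff μ).aestronglyMeasurable).restrict, ?_⟩
  rw [hasFiniteIntegral_iff_ofReal ((ae_restrict_iff' measurableSet_Ioi).2
    (Filter.Eventually.of_forall (f_nonneg_on hz hφbound hφmono hφdiff ha)))]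
  rw [main_id hz hφbound hφmono hφunb hφdiff hμ ha]
  exact lt_top_iff_ne_top.2 hsum

lemma part1_backward (hz : Tendsto (fun n => ‖z n‖) atTop atTop)
    (hφbound : ∀ r ≥ R₀, 0 < φ r ∧ log r ≤ φ r ∧ φ r ≤ r)
    (hφmono : MonotoneOn φ (Ioi R₀)) (hφunb : Tendsto φ atTop atTop)
    (hφdiff : Differentiable ℝ φ) {μ a : ℝ} (hμ : 0 < μ) (ha : R₀ < a)
    (hint : IntegrableOn (fun t => deriv φ t * countingFun z t / φ t ^ (μ + 1)) (Ioi a)) :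
    Summable (fun n => 1 / φ (‖z n‖) ^ μ) := by
  refine (summable_shift hz hφbound hμ ha).2
    ((summable_ofReal_iff (tail_nonneg hφbound hμ ha)).2 ?_)
  rw [← main_id hz hφbound hφmono hφunb hφdiff hμ ha]
  have h1 : ∫⁻ t in Ioi a, ENNReal.ofReal (deriv φ t * countingFun z t / φ t ^ (μ + 1))
      ≤ ∫⁻ t in Ioi a, (‖deriv φ t * countingFun z t / φ t ^ (μ + 1)‖₊ : ENNReal) :=
    lintegral_mono fun t => Real.ofReal_le_enorm _
  exact (lt_of_le_of_lt h1 hint.2).ne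

lemma order_le (hz : Tendsto (fun n => ‖z n‖) atTop atTop)
    (hφbound : ∀ r ≥ R₀, 0 < φ r ∧ log r ≤ φ r ∧ φ r ≤ r)
    (hφmono : MonotoneOn φ (Ioi R₀)) (hφunb : Tendsto φ atTop atTop)
    {μ : ℝ} (hμ : 0 < μ) (hs : Summable (fun n => 1 / φ (‖z n‖) ^ μ))
    {ε : ℝ} (hε : 0 < ε) :
    ∀ᶠ r in atTop, log (countingFun z r) / log (φ r) ≤ μ + ε := by
  classical
  set a : ℝ := max R₀ 0 + 1 with ha_def
  have ha : R₀ < a := lt_of_le_of_lt (le_max_left _ _) (lt_add_one _)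
  set ind : ℕ → ℝ := Set.indicator {n | a < ‖z n‖}
    (fun n => 1 / φ (‖z n‖) ^ μ) with hind
  have hsi : Summable ind := hs.indicator _
  have hind_nonneg : ∀ n, 0 ≤ ind n := by
    intro n
    rw [hind]
    by_cases h : n ∈ {n | a < ‖z n‖}
    · rw [Set.indicator_of_mem h]
      have h2 : 0 < φ (‖z n‖) := (hφbound _ (ha.le.trans (le_of_lt h))).1
      positivity
    · rw [Set.indicator_of_notMem h]
  set T : ℝ := ∑' n, ind n with hT_def
  have hT : 0 ≤ T := tsum_nonneg hind_nonneg
  set K : ℝ := countingFun z a + T + 1 with hK_def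
  have hK1 : 1 ≤ K := by
    have := csi_nonneg z a
    rw [hK_def]; linarith
  have hK0 : 0 < K := lt_of_lt_of_le one_pos hK1
  have claim : ∀ r, a < r → 1 ≤ φ r → countingFun z r ≤ K * φ r ^ μ := by
    intro r har hφr1
    have hrR : R₀ < r := ha.trans har
    have hφr : 0 < φ r := (hφbound r hrR.le).1
    have hpow : 0 < φ r ^ μ := Real.rpow_pos_of_pos hφr μ
    set M : Set ℕ := {n | a < ‖z n‖ ∧ ‖z n‖ ≤ r} with hM
    have hMfin : M.Finite := (csi_finite hz r).subset fun n hn => hn.2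
    have hsub : {n : ℕ | ‖z n‖ ≤ r}
        ⊆ {n : ℕ | ‖z n‖ ≤ a} ∪ M := by
      intro n hn
      by_cases h : ‖z n‖ ≤ a
      · exact Or.inl h
      · exact Or.inr ⟨lt_of_not_ge h, hn⟩
    have hcard : countingFun z r ≤ countingFun z a + (M.ncard : ℝ) := by
      rw [csi_card, csi_card]
      have h1 : ({n : ℕ | ‖z n‖ ≤ r}).ncard
          ≤ ({n : ℕ | ‖z n‖ ≤ a} ∪ M).ncard :=
        Set.ncard_le_ncard hsub ((csi_finite hz a).union hMfin)
      have h2 := Set.ncard_union_le {n : ℕ | ‖z n‖ ≤ a} M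
      exact_mod_cast le_trans h1 h2
    have hMb : (M.ncard : ℝ) ≤ T * φ r ^ μ := by
      have hterm : ∀ n ∈ hMfin.toFinset, (φ r ^ μ)⁻¹ ≤ ind n := by
        intro n hn
        rw [Set.Finite.mem_toFinset] at hn
        obtain ⟨hn1, hn2⟩ := hn
        have hzn : 0 < φ (‖z n‖) := (hφbound _ (ha.le.trans hn1.le)).1
        have hle : φ (‖z n‖) ≤ φ r :=
          hφmono (ha.trans hn1) hrR hn2
        have hple : φ (‖z n‖) ^ μ ≤ φ r ^ μ :=
          Real.rpow_le_rpow hzn.le hle hμ.le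
        have hzpow : 0 < φ (‖z n‖) ^ μ := Real.rpow_pos_of_pos hzn μ
        rw [hind, Set.indicator_of_mem (show n ∈ {m : ℕ | a < ‖z m‖} from hn1), one_div]
        exact inv_anti₀ hzpow hple
      have hsum : (M.ncard : ℝ) * (φ r ^ μ)⁻¹ ≤ T := by
        calc (M.ncard : ℝ) * (φ r ^ μ)⁻¹
            = ∑ _n ∈ hMfin.toFinset, (φ r ^ μ)⁻¹ := by
              rw [Finset.sum_const, Set.ncard_eq_toFinset_card _ hMfin, nsmul_eq_mul]
          _ ≤ ∑ n ∈ hMfin.toFinset, ind n := Finset.sum_le_sum hterm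
          _ ≤ T := Summable.sum_le_tsum _ (fun n _ => hind_nonneg n) hsi
      have := mul_le_mul_of_nonneg_right hsum hpow.le
      rwa [mul_assoc, inv_mul_cancel₀ hpow.ne', mul_one] at this
    have hpow1 : 1 ≤ φ r ^ μ := Real.one_le_rpow hφr1 hμ.le
    have hca := csi_nonneg z a
    calc countingFun z r ≤ countingFun z a + (M.ncard : ℝ) := hcard
      _ ≤ countingFun z a + T * φ r ^ μ := by linarith
      _ ≤ K * φ r ^ μ := by rw [hK_def]; nlinarith
  have hlog : Tendsto (fun r => log (φ r)) atTop atTop :=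
    Real.tendsto_log_atTop.comp hφunb
  filter_upwards [eventually_gt_atTop a, hφunb.eventually (eventually_ge_atTop 1),
    ev_one hz, hlog.eventually (eventually_ge_atTop (max (log K / ε) 1))]
    with r har hφr1 hn1 hlogr
  have hrR : R₀ < r := ha.trans har
  have hφr : 0 < φ r := (hφbound r hrR.le).1
  have hL : 0 < log (φ r) := lt_of_lt_of_le one_pos (le_trans (le_max_right _ _) hlogr)
  have h1 : countingFun z r ≤ K * φ r ^ μ := claim r har hφr1
  have h2 : log (countingFun z r) ≤ log K + μ * log (φ r) := by
    calc log (countingFun z r) ≤ log (K * φ r ^ μ) :=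
          Real.log_le_log (by linarith) h1
      _ = log K + μ * log (φ r) := by
          rw [Real.log_mul hK0.ne' (Real.rpow_pos_of_pos hφr μ).ne',
            Real.log_rpow hφr]
  have h3 : log K ≤ ε * log (φ r) := by
    have h4 : log K / ε ≤ log (φ r) := le_trans (le_max_left _ _) hlogr
    calc log K = (log K / ε) * ε := by field_simp
      _ ≤ log (φ r) * ε := mul_le_mul_of_nonneg_right h4 hε.le
      _ = ε * log (φ r) := mul_comm _ _
  rw [div_le_iff₀ hL]
  calc log (countingFun z r) ≤ log K + μ * log (φ r) := h2
    _ ≤ ε * log (φ r) + μ * log (φ r) := by linarith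
    _ = (μ + ε) * log (φ r) := by ring

lemma order_from_ratio (hz : Tendsto (fun n => ‖z n‖) atTop atTop)
    (hφunb : Tendsto φ atTop atTop) {b : ℝ} (hb0 : 0 < b)
    (hb : ∀ᶠ r in atTop, log (countingFun z r) / log (φ r) ≤ b) :
    ∀ᶠ r in atTop, countingFun z r ≤ φ r ^ b := by
  filter_upwards [hb, ev_one hz, hφunb.eventually (eventually_gt_atTop 1)]
    with r h1 h2 h3
  have hL : 0 < log (φ r) := Real.log_pos h3
  have hφr : 0 < φ r := lt_trans one_pos h3
  have hlog : log (countingFun z r) ≤ b * log (φ r) := by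
    have := (div_le_iff₀ hL).1 h1
    linarith
  calc countingFun z r = exp (log (countingFun z r)) :=
        (Real.exp_log (by linarith)).symm
    _ ≤ exp (b * log (φ r)) := Real.exp_le_exp.2 hlog
    _ = φ r ^ b := by rw [Real.rpow_def_of_pos hφr, mul_comm]

lemma summable_of_order (hz : Tendsto (fun n => ‖z n‖) atTop atTop)
    (hφbound : ∀ r ≥ R₀, 0 < φ r ∧ log r ≤ φ r ∧ φ r ≤ r)
    (hφmono : MonotoneOn φ (Ioi R₀)) (hφunb : Tendsto φ atTop atTop)
    (hφdiff : Differentiable ℝ φ) {c μ : ℝ} (hc : 0 < c) (hcμ : c < μ)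
    (hev : ∀ᶠ r in atTop, countingFun z r ≤ φ r ^ c) :
    Summable (fun n => 1 / φ (‖z n‖) ^ μ) := by
  have hμ : 0 < μ := hc.trans hcμ
  obtain ⟨r₀, hr₀⟩ := Filter.eventually_atTop.mp hev
  set a : ℝ := max r₀ (max R₀ 0) + 1 with ha_def
  have ha : R₀ < a :=
    lt_of_le_of_lt (le_trans (le_max_left _ _) (le_max_right r₀ _)) (lt_add_one _)
  have har : r₀ ≤ a := le_trans (le_max_left _ _) (le_of_lt (lt_add_one _))
  refine part1_backward hz hφbound hφmono hφunb hφdiff hμ ha ?_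
  have hdom := (ftc_rpow hφbound hφmono hφunb hφdiff (ν := μ - c) (sub_pos.2 hcμ) ha).1
  refine MeasureTheory.Integrable.mono hdom ((f_meas hz hφdiff μ).aestronglyMeasurable).restrict ?_
  refine (ae_restrict_iff' measurableSet_Ioi).2 (Filter.Eventually.of_forall fun t ht => ?_)
  have htR : R₀ < t := ha.trans ht
  have hφt : 0 < φ t := (hφbound t htR.le).1
  have hd : 0 ≤ deriv φ t := deriv_nonneg hφmono hφdiff htR
  have hnt : countingFun z t ≤ φ t ^ c := hr₀ t (le_trans har (le_of_lt ht))
  have hf_nonneg : 0 ≤ deriv φ t * countingFun z t / φ t ^ (μ + 1) :=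
    f_nonneg_on hz hφbound hφmono hφdiff ha t ht
  have hh_eq : deriv φ t * φ t ^ c / φ t ^ (μ + 1) = deriv φ t * φ t ^ (-(μ - c) - 1) := by
    rw [mul_div_assoc, ← Real.rpow_sub hφt]
    congr 1
    · congr 1
      ring
  have hbound : deriv φ t * countingFun z t / φ t ^ (μ + 1)
      ≤ deriv φ t * φ t ^ (-(μ - c) - 1) := by
    rw [← hh_eq]
    have hpow : 0 < φ t ^ (μ + 1) := Real.rpow_pos_of_pos hφt _
    gcongr
  rw [Real.norm_eq_abs, Real.norm_eq_abs, abs_of_nonneg hf_nonneg, abs_of_nonneg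
    (mul_nonneg hd (Real.rpow_nonneg hφt.le _))]
  exact hbound

end CSIAux

/-- For a sequence `{z_n}` with `|z_n| → ∞` and counting function `n(r)`:
for `μ > 0` the sum `Σ 1/φ(|z_n|)^μ` converges iff the integral
`∫^∞ φ'(t) n(t)/φ(t)^{μ+1} dt` converges; consequently the φ-order of `n(r)`
equals the φ-exponent of convergence of `{z_n}`. -/
theorem counting_sum_integral (R₀ : ℝ) (φ : ℝ → ℝ) (z : ℕ → ℂ)
    (hz : Tendsto (fun n => ‖z n‖) atTop atTop)
    (hφbound : ∀ r ≥ R₀, 0 < φ r ∧ log r ≤ φ r ∧ φ r ≤ r)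
    (hφmono : MonotoneOn φ (Ioi R₀))
    (hφunb : Tendsto φ atTop atTop)
    (hφdiff : Differentiable ℝ φ) :
    (∀ μ > (0:ℝ),
      (Summable (fun n => 1 / φ (‖z n‖) ^ μ) ↔
        ∃ a > R₀, IntegrableOn
          (fun t => deriv φ t * countingFun z t / φ t ^ (μ + 1)) (Ioi a))) ∧
    ((∃ μ > (0:ℝ), Summable (fun n => 1 / φ (‖z n‖) ^ μ)) →
      Filter.limsup (fun r => log (countingFun z r) / log (φ r)) atTop =
        sInf {μ : ℝ | 0 < μ ∧ Summable (fun n => 1 / φ (‖z n‖) ^ μ)}) ∧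
    ((∀ μ > (0:ℝ), ¬ Summable (fun n => 1 / φ (‖z n‖) ^ μ)) →
      ¬ IsBoundedUnder (· ≤ ·) atTop
        (fun r => log (countingFun z r) / log (φ r))) := by
  have ha0 : R₀ < max R₀ 0 + 1 := lt_of_le_of_lt (le_max_left _ _) (lt_add_one _)
  refine ⟨fun μ hμ => ⟨fun hs => ⟨max R₀ 0 + 1, ha0,
      CSIAux.part1_forward hz hφbound hφmono hφunb hφdiff hμ ha0 hs⟩,
    fun ⟨a, ha, h⟩ => CSIAux.part1_backward hz hφbound hφmono hφunb hφdiff hμ ha h⟩, ?_, ?_⟩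
  · rintro ⟨μ₀, hμ₀, hs₀⟩
    have hevge0 : ∀ᶠ r in atTop, 0 ≤ log (countingFun z r) / log (φ r) := by
      filter_upwards [CSIAux.ev_one hz, hφunb.eventually (eventually_gt_atTop 1)] with r h1 h2
      exact div_nonneg (Real.log_nonneg h1) (Real.log_pos h2).le
    have hbound : IsBoundedUnder (· ≤ ·) atTop
        (fun r => log (countingFun z r) / log (φ r)) :=
      ⟨μ₀ + 1, eventually_map.2
        (CSIAux.order_le hz hφbound hφmono hφunb hμ₀ hs₀ one_pos)⟩
    have hblow : IsBoundedUnder (· ≥ ·) atTop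
        (fun r => log (countingFun z r) / log (φ r)) :=
      ⟨0, eventually_map.2 (hevge0.mono fun r h => h)⟩
    have hcob : IsCoboundedUnder (· ≤ ·) atTop
        (fun r => log (countingFun z r) / log (φ r)) :=
      hblow.isCoboundedUnder_le
    have hSne : Set.Nonempty
        {μ : ℝ | 0 < μ ∧ Summable (fun n => 1 / φ (‖z n‖) ^ μ)} :=
      ⟨μ₀, hμ₀, hs₀⟩
    have hSbd : BddBelow
        {μ : ℝ | 0 < μ ∧ Summable (fun n => 1 / φ (‖z n‖) ^ μ)} :=
      ⟨0, fun μ hμ => hμ.1.le⟩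
    refine le_antisymm ?_ ?_
    · refine le_csInf hSne fun μ hμS => ?_
      have hall : ∀ ε > (0:ℝ),
          Filter.limsup (fun r => log (countingFun z r) / log (φ r)) atTop ≤ μ + ε :=
        fun ε hε => Filter.limsup_le_of_le hcob
          (CSIAux.order_le hz hφbound hφmono hφunb hμS.1 hμS.2 hε)
      by_contra hlt
      push_neg at hlt
      have h6 := hall ((Filter.limsup (fun r => log (countingFun z r) / log (φ r)) atTop - μ)/2)
        (by linarith)
      linarith
    · have hL0 : 0 ≤ Filter.limsup (fun r => log (countingFun z r) / log (φ r)) atTop :=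
        le_limsup_of_frequently_le hevge0.frequently hbound
      by_contra hlt
      push_neg at hlt
      obtain ⟨c, hc1, hc2⟩ := exists_between hlt
      have hc0 : 0 < c := lt_of_le_of_lt hL0 hc1
      have hev := CSIAux.order_from_ratio hz hφunb hc0
        ((eventually_lt_of_limsup_lt hc1 hbound).mono fun r h => h.le)
      have hmem : ∀ μ', c < μ' →
          μ' ∈ {μ : ℝ | 0 < μ ∧ Summable (fun n => 1 / φ (‖z n‖) ^ μ)} :=
        fun μ' hμ' => ⟨hc0.trans hμ',
          CSIAux.summable_of_order hz hφbound hφmono hφunb hφdiff hc0 hμ' hev⟩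
      have h5 := csInf_le hSbd (hmem ((c + sInf {μ : ℝ | 0 < μ ∧
        Summable (fun n => 1 / φ (‖z n‖) ^ μ)})/2) (by linarith))
      linarith
  · intro hns hbd
    obtain ⟨b, hb⟩ := hbd
    rw [eventually_map] at hb
    have hc0 : (0:ℝ) < max b 1 := lt_of_lt_of_le one_pos (le_max_right _ _)
    have hev := CSIAux.order_from_ratio hz hφunb hc0
      (hb.mono fun r h => le_trans h (le_max_left _ _))
    exact hns (max b 1 + 1) (by linarith)
      (CSIAux.summable_of_order hz hφbound hφmono hφunb hφdiff hc0 (lt_add_one _) hev)
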